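/- For a symbol S with two rows of entries a_1, a_3, ..., a_{2s−1} and a_2, a_4, ..., a_{2s} (all nonnegative integers), define A(S) = Σ_{i<j} max(a_i, a_j) − Σ_{i=1}^{s−1} binom(2i, 2) − 2·Σ_{i=1}^{2s} binom(a_i + 1, 2) + m², where m is the rank of the symbol. For the symbol S_min with rows (0, 2, 4, ..., 2(s−1)) and (1, 3, ..., 2(s−d)−1, 2(s−d+1), ..., 2s) where m = s² + d and 0 ≤ d ≤ s, one has m(m−1) − A(S_min) = s(s−1)(4s+1)/6 + d(2s+1−d). -/

import Mathlib

open Finset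

/-- The combined entries of the symbol `S_min`: the first `s` entries are the top row
`(0, 2, …, 2(s−1))`, the last `s` are the bottom row
`(1, 3, …, 2(s−d)−1, 2(s−d+1), …, 2s)`. -/
def symbEntry (s d k : ℕ) : ℕ :=
  if k < s then 2 * k
  else if k - s < s - d then 2 * (k - s) + 1 else 2 * (k - s) + 2

/-- `A(S) = Σ_{i<j} max(a_i, a_j) − Σ_{i=1}^{s−1} C(2i,2) − 2·Σ_i C(a_i+1,2) + m²`
for a symbol with `2s` entries `a : ℕ → ℕ` and rank `m`. -/
def symbA (s m : ℕ) (a : ℕ → ℕ) : ℤ :=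
  (∑ i ∈ range (2 * s), ∑ j ∈ range (2 * s),
      if i < j then (max (a i) (a j) : ℤ) else 0) -
    (∑ i ∈ Icc 1 (s - 1), (Nat.choose (2 * i) 2 : ℤ)) -
    2 * (∑ i ∈ range (2 * s), (Nat.choose (a i + 1) 2 : ℤ)) + (m : ℤ) ^ 2

private lemma sumA (n : ℕ) : 2 * ∑ i ∈ range n, (i:ℤ) = n * (n - 1) := by
  induction n with
  | zero => simp
  | succ k ih => rw [sum_range_succ]; push_cast at ih ⊢; linarith

private lemma sumB (n : ℕ) : 6 * ∑ i ∈ range n, (i:ℤ)^2 = n * (n - 1) * (2 * n - 1) := by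
  induction n with
  | zero => simp
  | succ k ih =>
    rw [sum_range_succ]; push_cast at ih ⊢; linear_combination ih

private lemma sumPoly (a b c : ℤ) (n : ℕ) :
    ∑ x ∈ range n, (a * (x:ℤ)^2 + b * (x:ℤ) + c)
      = a * (∑ x ∈ range n, (x:ℤ)^2) + b * (∑ x ∈ range n, (x:ℤ)) + (n:ℤ) * c := by
  induction n with
  | zero => simp
  | succ k ih =>
    rw [sum_range_succ, sum_range_succ, sum_range_succ, ih]; push_cast; ring

private lemma sumPoly1 (b c : ℤ) (n : ℕ) :
    ∑ x ∈ range n, (b * (x:ℤ) + c)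
      = b * (∑ x ∈ range n, (x:ℤ)) + (n:ℤ) * c := by
  induction n with
  | zero => simp
  | succ k ih =>
    rw [sum_range_succ, sum_range_succ, ih]; push_cast; ring

private lemma sum_if_lt (g : ℕ → ℤ) {i n : ℕ} (h : i ≤ n) :
    ∑ j ∈ range n, (if j < i then g j else 0) = ∑ j ∈ range i, g j := by
  obtain ⟨k, rfl⟩ := Nat.exists_eq_add_of_le h
  rw [sum_range_add]
  have h1 : ∑ x ∈ range k, (if i + x < i then g (i + x) else 0) = 0 :=
    sum_eq_zero fun x _ => if_neg (by omega)
  have h2 : ∀ j ∈ range i, (if j < i then g j else 0) = g j :=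
    fun j hj => if_pos (mem_range.mp hj)
  rw [h1, add_zero, sum_congr rfl h2]

private lemma sum_if_ge (g : ℕ → ℤ) {t n : ℕ} (h : t ≤ n) :
    ∑ x ∈ range n, (if t ≤ x then g x else 0)
      = ∑ x ∈ range n, g x - ∑ x ∈ range t, g x := by
  obtain ⟨k, rfl⟩ := Nat.exists_eq_add_of_le h
  rw [sum_range_add, sum_range_add (f := g)]
  have h1 : ∑ x ∈ range t, (if t ≤ x then g x else 0) = 0 :=
    sum_eq_zero fun x hx => if_neg (by have := mem_range.mp hx; omega)
  have h2 : ∀ x ∈ range k, (if t ≤ t + x then g (t + x) else 0) = g (t + x) :=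
    fun x _ => if_pos (by omega)
  rw [h1, sum_congr rfl h2]
  ring

private lemma sum_ind (t n : ℕ) :
    ∑ x ∈ range n, (if t ≤ x then (1:ℤ) else 0) = (n:ℤ) - (min t n : ℕ) := by
  induction n with
  | zero => simp
  | succ k ih =>
    rw [sum_range_succ, ih]
    split_ifs with h <;> push_cast <;> omega

private lemma sum_min {t s : ℕ} (h : t ≤ s) :
    ∑ i ∈ range s, ((min t i : ℕ):ℤ)
      = (∑ i ∈ range t, (i:ℤ)) + ((s:ℤ) - (t:ℤ)) * t := by
  obtain ⟨k, rfl⟩ := Nat.exists_eq_add_of_le h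
  rw [sum_range_add]
  have h1 : ∀ i ∈ range t, ((min t i : ℕ):ℤ) = (i:ℤ) := by
    intro i hi
    have h' : min t i = i := by have := mem_range.mp hi; omega
    rw [h']
  have h2 : ∀ x ∈ range k, ((min t (t + x) : ℕ):ℤ) = (t:ℤ) := by
    intro x _
    have h' : min t (t + x) = t := by omega
    rw [h']
  rw [sum_congr rfl h1, sum_congr rfl h2, sum_const, card_range]
  push_cast; ring

private lemma ch2n (k : ℕ) : 2 * Nat.choose (k+1) 2 = (k+1) * k := by
  have h2 : 2 ∣ (k+1) * k := by
    rcases Nat.even_or_odd k with h | h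
    · exact dvd_mul_of_dvd_right h.two_dvd _
    · exact dvd_mul_of_dvd_left (Odd.add_one h).two_dvd _
  rw [Nat.choose_two_right, Nat.add_sub_cancel, Nat.mul_div_cancel' h2]

private lemma chQn (x : ℕ) : Nat.choose (2*(1+x)) 2 = 2*x^2+3*x+1 := by
  rw [Nat.choose_two_right]
  have h : 2*(1+x) * (2*(1+x) - 1) = 2 * (2*x^2+3*x+1) := by
    have h1 : 2*(1+x) - 1 = 2*x+1 := by omega
    rw [h1]; ring
  rw [h, Nat.mul_div_cancel_left _ (by norm_num)]

private lemma div6 (s : ℕ) : ∃ k, s * (s - 1) * (4 * s + 1) = 6 * k := by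
  induction s with
  | zero => exact ⟨0, rfl⟩
  | succ n ih =>
    obtain ⟨k, hk⟩ := ih
    refine ⟨k + n * (2 * n + 1), ?_⟩
    have hstep : (n+1) * ((n+1) - 1) * (4 * (n+1) + 1)
        = n * (n-1) * (4*n+1) + 6 * (n * (2*n+1)) := by
      cases n with
      | zero => norm_num
      | succ p => simp only [Nat.add_sub_cancel, Nat.succ_sub_one]; ring
    rw [hstep, hk]; ring

private lemma sum_split (P g : ℕ → ℤ) {t n : ℕ} (h : t ≤ n) :
    ∑ x ∈ range n, (P x + (if t ≤ x then g x else 0))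
      = ∑ x ∈ range n, P x + (∑ x ∈ range n, g x - ∑ x ∈ range t, g x) := by
  rw [sum_add_distrib, sum_if_ge g h]

private lemma eTopZ (s d i : ℕ) (h : i < s) : (symbEntry s d i : ℤ) = 2 * i := by
  unfold symbEntry; rw [if_pos h]; push_cast; ring

private lemma eBotZ (s d x : ℕ) :
    (symbEntry s d (s + x) : ℤ) = 2 * x + 1 + (if s - d ≤ x then 1 else 0) := by
  unfold symbEntry
  split_ifs <;> omega

private lemma maxdec (s d : ℕ) (i j : ℕ) :
    (if i < j then (max ((symbEntry s d i : ℤ)) ((symbEntry s d j : ℤ))) else 0)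
      = (if i < j then (symbEntry s d j : ℤ) else 0)
        + (if i < s ∧ s ≤ j ∧ j - s < i then (symbEntry s d i : ℤ) - (symbEntry s d j : ℤ) else 0) := by
  unfold symbEntry
  split_ifs <;> omega

theorem stmt18 (s d m : ℕ) (hs : 1 ≤ s) (hd : d ≤ s) (hm : m = s ^ 2 + d) :
    (m : ℤ) * ((m : ℤ) - 1) - symbA s m (symbEntry s d) =
      ((s * (s - 1) * (4 * s + 1) / 6 + d * (2 * s + 1 - d) : ℕ) : ℤ) := by
  have h2s : 2 * s = s + s := two_mul s
  have hts : s - d ≤ s := Nat.sub_le s d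
  -- the first double sum, sorted by "usual" maxima
  have hfirst : (∑ i ∈ range (2*s), ∑ j ∈ range (2*s),
        if i < j then (symbEntry s d j : ℤ) else 0)
      = 4 * (∑ x ∈ range s, (x:ℤ)^2) + (2*(s:ℤ)+2) * (∑ x ∈ range s, (x:ℤ))
        + 2*(s:ℤ)^2 - (∑ x ∈ range (s-d), (x:ℤ)) - ((s-d : ℕ):ℤ) * s := by
    rw [sum_comm]
    have hc1 : ∀ j ∈ range (2*s),
        (∑ i ∈ range (2*s), if i < j then (symbEntry s d j : ℤ) else 0)
          = (j:ℤ) * (symbEntry s d j : ℤ) := by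
      intro j hj
      rw [sum_if_lt (fun _ => (symbEntry s d j : ℤ)) (le_of_lt (mem_range.mp hj)),
        sum_const, card_range, nsmul_eq_mul]
    rw [sum_congr rfl hc1, h2s, sum_range_add]
    have hc2 : ∀ j ∈ range s, (j:ℤ) * (symbEntry s d j : ℤ)
        = 2*(j:ℤ)^2 + 0*(j:ℤ) + 0 := by
      intro j hj
      rw [eTopZ s d j (mem_range.mp hj)]; ring
    have hc3 : ∀ x ∈ range s, ((s+x : ℕ):ℤ) * (symbEntry s d (s+x) : ℤ)
        = (2*(x:ℤ)^2 + (2*(s:ℤ)+1)*(x:ℤ) + (s:ℤ))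
          + (if s - d ≤ x then 1*(x:ℤ) + (s:ℤ) else 0) := by
      intro x _
      rw [eBotZ]; push_cast; split_ifs <;> ring
    rw [sum_congr rfl hc2, sum_congr rfl hc3, sum_split _ _ hts]
    simp only [sumPoly, sumPoly1]
    push_cast
    ring
  -- the correction double sum
  have hE2 : (∑ i ∈ range (2*s), ∑ j ∈ range (2*s),
        if i < s ∧ s ≤ j ∧ j - s < i then (symbEntry s d i : ℤ) - (symbEntry s d j : ℤ) else 0)
      = (∑ x ∈ range s, (x:ℤ)^2) - (∑ x ∈ range s, (x:ℤ))
        + (∑ x ∈ range (s-d), (x:ℤ)) + ((s:ℤ) - ((s-d:ℕ):ℤ)) * ((s-d:ℕ):ℤ) := by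
    rw [h2s, sum_range_add]
    have hzero : (∑ y ∈ range s, ∑ j ∈ range (s+s),
        if s + y < s ∧ s ≤ j ∧ j - s < s + y
          then (symbEntry s d (s+y) : ℤ) - (symbEntry s d j : ℤ) else 0) = 0 :=
      sum_eq_zero fun y _ => sum_eq_zero fun j _ => if_neg (by omega)
    rw [hzero, add_zero]
    have hin : ∀ i ∈ range s, (∑ j ∈ range (s+s),
        if i < s ∧ s ≤ j ∧ j - s < i
          then (symbEntry s d i : ℤ) - (symbEntry s d j : ℤ) else 0)
        = (i:ℤ)^2 - (i:ℤ) + ((min (s-d) i : ℕ):ℤ) := by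
      intro i hi
      have hi' : i < s := mem_range.mp hi
      rw [sum_range_add]
      have hz2 : (∑ j ∈ range s,
          if i < s ∧ s ≤ j ∧ j - s < i
            then (symbEntry s d i : ℤ) - (symbEntry s d j : ℤ) else 0) = 0 :=
        sum_eq_zero fun j hj => if_neg (by have := mem_range.mp hj; omega)
      rw [hz2, zero_add]
      have hterm : ∀ x ∈ range s,
          (if i < s ∧ s ≤ s + x ∧ s + x - s < i
            then (symbEntry s d i : ℤ) - (symbEntry s d (s+x) : ℤ) else 0)
          = (if x < i then ((-2)*(x:ℤ) + (2*(i:ℤ)-1))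
              - (if s - d ≤ x then (1:ℤ) else 0) else 0) := by
        intro x _
        rw [eTopZ s d i hi', eBotZ]
        split_ifs <;> omega
      rw [sum_congr rfl hterm, sum_if_lt _ (le_of_lt hi'), sum_sub_distrib,
        sumPoly1, sum_ind]
      have hAi := sumA i
      push_cast at hAi ⊢
      linear_combination -hAi
    rw [sum_congr rfl hin, sum_add_distrib, sum_sub_distrib, sum_min hts]
    push_cast
    ring
  -- Q
  have hIcc : Icc 1 (s-1) = Ico 1 s := by
    rw [← Finset.Ico_add_one_right_eq_Icc]; congr 1; omega
  have hQ : (∑ i ∈ Icc 1 (s-1), (Nat.choose (2*i) 2 : ℤ))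
      = 2 * (∑ x ∈ range (s-1), (x:ℤ)^2) + 3 * (∑ x ∈ range (s-1), (x:ℤ)) + ((s-1:ℕ):ℤ) := by
    rw [hIcc, sum_Ico_eq_sum_range]
    have hc : ∀ x ∈ range (s-1), ((Nat.choose (2*(1+x)) 2 : ℕ):ℤ)
        = 2*(x:ℤ)^2 + 3*(x:ℤ) + 1 := by
      intro x _
      rw [chQn]; push_cast; ring
    rw [sum_congr rfl hc, sumPoly]
    ring
  -- R
  have hR2 : 2 * (∑ i ∈ range (2*s), (Nat.choose (symbEntry s d i + 1) 2 : ℤ))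
      = 8 * (∑ x ∈ range s, (x:ℤ)^2) + 12 * (∑ x ∈ range s, (x:ℤ)) + 6*(s:ℤ)
        - 4 * (∑ x ∈ range (s-d), (x:ℤ)) - 4*((s-d:ℕ):ℤ) := by
    rw [mul_sum, h2s, sum_range_add]
    have hc1 : ∀ x ∈ range s, (2:ℤ) * (Nat.choose (symbEntry s d x + 1) 2 : ℤ)
        = 4*(x:ℤ)^2 + 2*(x:ℤ) + 0 := by
      intro x hx
      have h := congrArg (fun y : ℕ => (y:ℤ)) (ch2n (symbEntry s d x))
      push_cast at h
      rw [eTopZ s d x (mem_range.mp hx)] at h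
      linear_combination h
    have hc2 : ∀ x ∈ range s, (2:ℤ) * (Nat.choose (symbEntry s d (s+x) + 1) 2 : ℤ)
        = (4*(x:ℤ)^2 + 6*(x:ℤ) + 2)
          + (if s - d ≤ x then 4*(x:ℤ) + 4 else 0) := by
      intro x _
      have h := congrArg (fun y : ℕ => (y:ℤ)) (ch2n (symbEntry s d (s+x)))
      push_cast at h
      rw [eBotZ] at h
      split_ifs at h ⊢ <;> linear_combination h
    rw [sum_congr rfl hc1, sum_congr rfl hc2, sum_split _ _ hts]
    simp only [sumPoly, sumPoly1]
    push_cast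
    ring
  -- assemble the maxima double sum
  have hP : (∑ i ∈ range (2 * s), ∑ j ∈ range (2 * s),
        if i < j then (max ((symbEntry s d i : ℤ)) ((symbEntry s d j : ℤ))) else 0)
      = (4 * (∑ x ∈ range s, (x:ℤ)^2) + (2*(s:ℤ)+2) * (∑ x ∈ range s, (x:ℤ))
          + 2*(s:ℤ)^2 - (∑ x ∈ range (s-d), (x:ℤ)) - ((s-d : ℕ):ℤ) * s)
        + ((∑ x ∈ range s, (x:ℤ)^2) - (∑ x ∈ range s, (x:ℤ))
          + (∑ x ∈ range (s-d), (x:ℤ)) + ((s:ℤ) - ((s-d:ℕ):ℤ)) * ((s-d:ℕ):ℤ)) := by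
    rw [← hfirst, ← hE2, ← sum_add_distrib]
    refine sum_congr rfl fun i _ => ?_
    rw [← sum_add_distrib]
    exact sum_congr rfl fun j _ => maxdec s d i j
  -- final assembly
  obtain ⟨k, hk⟩ := div6 s
  unfold symbA
  rw [hP, hQ, hR2, hk, Nat.mul_div_cancel_left _ (by norm_num : 0 < 6)]
  have hmZ : (m:ℤ) = (s:ℤ)^2 + d := by rw [hm]; push_cast; ring
  have htZ : ((s-d:ℕ):ℤ) = (s:ℤ) - (d:ℤ) := by omega
  have hs1 : ((s-1:ℕ):ℤ) = (s:ℤ) - 1 := by omega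
  have hcast : ((k + d * (2*s+1-d) : ℕ) : ℤ) = (k:ℤ) + (d:ℤ) * (2*(s:ℤ)+1-(d:ℤ)) := by
    rw [Nat.cast_add, Nat.cast_mul, Nat.cast_sub (by omega : d ≤ 2*s+1)]
    push_cast; ring
  rw [hcast, hmZ, htZ, hs1]
  have hkZ : (s:ℤ) * ((s:ℤ)-1) * (4*(s:ℤ)+1) = 6*(k:ℤ) := by
    have h := congrArg (fun y : ℕ => (y:ℤ)) hk
    push_cast [Nat.cast_sub hs] at h
    linarith
  have hAs := sumA s
  have hBs := sumB s
  have hAt := sumA (s-d)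
  have hAu := sumA (s-1)
  have hBu := sumB (s-1)
  rw [hs1] at hAu hBu
  rw [htZ] at hAt
  apply mul_left_cancel₀ (show (6:ℤ) ≠ 0 by norm_num)
  linear_combination (33-6*(s:ℤ))*hAs + 3*hBs - 12*hAt + 9*hAu + 2*hBu + hkZ
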